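/- Fix positive integers b, c and integers a_1, a_2 with 0 < b a_2 <= a_1. The coefficients e(p,q) = [a_2 choose p]_{v^b} [a_1 - bp choose q]_{v^c} satisfy the second branch of the quantum greedy recurrence: whenever c a_1 q >= b a_2 p and (p,q) != (0,0), e(p,q) = \sum_{l=1}^{q} (-1)^{l-1} e(p, q-l) [[a_1 - bp]_+ + l - 1 choose l]_{v^c}. -/

import Mathlib

open Finset

noncomputable section

/-- Field of rational functions over ℚ, containing `ℤ[w^{±1}]`. -/
abbrev KK : Type := RatFunc ℚ

/-- The indeterminate `w`. -/
def wvar : KK := RatFunc.X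

/-- The bar-invariant quantum integer `[n]_u = (u^n - u^{-n})/(u - u⁻¹)`. -/
def qint (u : KK) (n : ℤ) : KK := (u ^ n - u ^ (-n)) / (u - u⁻¹)

/-- The bar-invariant quantum binomial coefficient. -/
def qbinom (u : KK) (n : ℤ) (k : ℕ) : KK :=
  (∏ i ∈ Finset.range k, qint u (n - i)) / (∏ i ∈ Finset.range k, qint u ((i : ℤ) + 1))

lemma X_pow_ne_one (k : ℕ) (hk : 0 < k) : (RatFunc.X : KK) ^ k ≠ 1 := by
  intro h
  have h2 : algebraMap (Polynomial ℚ) KK (Polynomial.X ^ k) = algebraMap (Polynomial ℚ) KK 1 := by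
    rw [map_pow, map_one, RatFunc.algebraMap_X, h]
  have h3 := RatFunc.algebraMap_injective ℚ h2
  have := congrArg Polynomial.natDegree h3
  simp [Polynomial.natDegree_X_pow] at this
  omega

lemma wvar_pow_ne_one (c : ℕ) (hc : 0 < c) : ∀ n : ℤ, 0 < n → ((wvar ^ c : KK)) ^ n ≠ 1 := by
  intro n hn h
  lift n to ℕ using hn.le
  rw [zpow_natCast, ← pow_mul] at h
  have hn' : 0 < n := by exact_mod_cast hn
  exact X_pow_ne_one (c * n) (by positivity) h

lemma wvar_pow_ne_zero (c : ℕ) : (wvar ^ c : KK) ≠ 0 := pow_ne_zero _ RatFunc.X_ne_zero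

lemma qint_zero {u : KK} : qint u 0 = 0 := by simp [qint]
lemma qint_neg {u : KK} (n : ℤ) : qint u (-n) = -qint u n := by
  rw [qint, qint, neg_neg, ← neg_div, neg_sub]
lemma qbinom_zero {u : KK} (n : ℤ) : qbinom u n 0 = 1 := by simp [qbinom]

lemma qbinom_neg {u : KK} (n : ℤ) (l : ℕ) :
    qbinom u (-n) l = (-1) ^ l * qbinom u (n + l - 1) l := by
  have h1 : (∏ i ∈ range l, qint u (-n - i)) = (-1:KK)^l * ∏ i ∈ range l, qint u (n + i) := by
    have : ∀ i ∈ range l, qint u (-n - i) = (-1:KK) * qint u (n + i) := by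
      intro i _
      rw [show -n - (i:ℤ) = -(n + i) from by ring, qint_neg, neg_one_mul]
    rw [Finset.prod_congr rfl this, Finset.prod_mul_distrib, Finset.prod_const, Finset.card_range]
  have h2 : (∏ i ∈ range l, qint u ((n + l - 1) - i)) = ∏ i ∈ range l, qint u (n + i) := by
    rw [← Finset.prod_range_reflect (fun i => qint u (n + i)) l]
    refine Finset.prod_congr rfl fun i hi => ?_
    rw [Finset.mem_range] at hi
    congr 1
    omega
  rw [qbinom, qbinom, h1, h2, mul_div_assoc]

variable {u : KK} (hu0 : u ≠ 0) (hu : ∀ n : ℤ, 0 < n → u ^ n ≠ 1)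

include hu0 hu

lemma qden_ne_zero : u - u⁻¹ ≠ 0 := by
  intro h
  have h2 : u * u = u * u⁻¹ := by
    have := sub_eq_zero.mp h
    rw [← this]
  rw [mul_inv_cancel₀ hu0] at h2
  have : u ^ (2:ℤ) = 1 := by rw [show (2:ℤ) = (2:ℕ) from rfl, zpow_natCast, pow_two]; exact h2
  exact hu 2 (by norm_num) this

lemma qint_ne_zero {n : ℤ} (hn : n ≠ 0) : qint u n ≠ 0 := by
  apply div_ne_zero _ (qden_ne_zero hu0 hu)
  intro h
  have h2 : u ^ n * u ^ n = u ^ (-n) * u ^ n := by rw [sub_eq_zero.mp h]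
  rw [← zpow_add₀ hu0, ← zpow_add₀ hu0, neg_add_cancel, zpow_zero] at h2
  rcases lt_or_gt_of_ne hn with h3 | h3
  · exact hu (-(n+n)) (by omega) (by rw [zpow_neg, h2, inv_one])
  · exact hu (n+n) (by omega) h2

omit hu in
lemma qint_split_A (n k : ℤ) : qint u n = u ^ (-k) * qint u (n - k) + u ^ (n - k) * qint u k := by
  rw [qint, qint, qint, ← mul_div_assoc, ← mul_div_assoc, ← add_div]
  congr 1
  simp only [mul_sub, ← zpow_add₀ hu0]
  ring_nf

omit hu in
lemma qint_split_B (n k : ℤ) : qint u n = u ^ k * qint u (n - k) + u ^ (k - n) * qint u k := by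
  rw [qint, qint, qint, ← mul_div_assoc, ← mul_div_assoc, ← add_div]
  congr 1
  simp only [mul_sub, ← zpow_add₀ hu0]
  ring_nf

lemma qden_prod_ne_zero (k : ℕ) : (∏ i ∈ Finset.range k, qint u ((i : ℤ) + 1)) ≠ 0 := by
  apply Finset.prod_ne_zero_iff.mpr
  intro i _
  exact qint_ne_zero hu0 hu (by omega)

lemma qbinom_pascal_A (n : ℤ) (k : ℕ) :
    qbinom u n (k+1) = u ^ (-(k+1:ℤ)) * qbinom u (n-1) (k+1)
      + u ^ (n-(k+1:ℤ)) * qbinom u (n-1) k := by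
  have hnum1 : (∏ i ∈ range (k+1), qint u (n - i)) = (∏ i ∈ range k, qint u (n - 1 - i)) * qint u n := by
    rw [Finset.prod_range_succ']
    congr 1
    · exact Finset.prod_congr rfl fun i _ => by congr 1; push_cast; ring
    · congr 1; push_cast; ring
  have hnum2 : (∏ i ∈ range (k+1), qint u (n - 1 - i)) = (∏ i ∈ range k, qint u (n - 1 - i)) * qint u (n - (k+1)) := by
    rw [Finset.prod_range_succ, show n - 1 - (k:ℤ) = n - ((k:ℤ)+1) from by ring]
  have hden : (∏ i ∈ range (k+1), qint u ((i:ℤ) + 1)) = (∏ i ∈ range k, qint u ((i:ℤ)+1)) * qint u (k+1) := by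
    rw [Finset.prod_range_succ]
  have hD : (∏ i ∈ range k, qint u ((i:ℤ)+1)) ≠ 0 := qden_prod_ne_zero hu0 hu k
  have hk1 : qint u ((k:ℤ)+1) ≠ 0 := qint_ne_zero hu0 hu (by omega)
  rw [qbinom, qbinom, qbinom, hnum1, hnum2, hden,
    qint_split_A hu0 n ((k:ℤ)+1)]
  rw [show (-((k:ℤ)+1)) = (-(k+1:ℤ)) from by ring]
  set A := u ^ (-(k+1:ℤ)) with hA
  set B := u ^ (n-((k:ℤ)+1)) with hB
  field_simp

lemma qbinom_pascal_B (n : ℤ) (k : ℕ) :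
    qbinom u n (k+1) = u ^ ((k+1:ℤ)) * qbinom u (n-1) (k+1)
      + u ^ ((k+1:ℤ)-n) * qbinom u (n-1) k := by
  have hnum1 : (∏ i ∈ range (k+1), qint u (n - i)) = (∏ i ∈ range k, qint u (n - 1 - i)) * qint u n := by
    rw [Finset.prod_range_succ']
    congr 1
    · exact Finset.prod_congr rfl fun i _ => by congr 1; push_cast; ring
    · congr 1; push_cast; ring
  have hnum2 : (∏ i ∈ range (k+1), qint u (n - 1 - i)) = (∏ i ∈ range k, qint u (n - 1 - i)) * qint u (n - (k+1)) := by
    rw [Finset.prod_range_succ, show n - 1 - (k:ℤ) = n - ((k:ℤ)+1) from by ring]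
  have hden : (∏ i ∈ range (k+1), qint u ((i:ℤ) + 1)) = (∏ i ∈ range k, qint u ((i:ℤ)+1)) * qint u (k+1) := by
    rw [Finset.prod_range_succ]
  have hD : (∏ i ∈ range k, qint u ((i:ℤ)+1)) ≠ 0 := qden_prod_ne_zero hu0 hu k
  have hk1 : qint u ((k:ℤ)+1) ≠ 0 := qint_ne_zero hu0 hu (by omega)
  rw [qbinom, qbinom, qbinom, hnum1, hnum2, hden,
    qint_split_B hu0 n ((k:ℤ)+1)]
  set A := u ^ ((k:ℤ)+1) with hA
  set B := u ^ (((k:ℤ)+1)-n) with hB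
  field_simp
def qf (u : KK) (m : ℤ) (q : ℕ) : KK :=
  ∑ l ∈ Finset.range (q+1), qbinom u m (q - l) * qbinom u (-m) l

omit hu0 hu in
lemma qf_zero (m : ℤ) : qf u m 0 = 1 := by simp [qf, qbinom_zero]

omit hu0 hu in
lemma qf_symm {m : ℤ} {q : ℕ} : qf u (-m) q = qf u m q := by
  have h := Finset.sum_range_reflect
    (fun l => qbinom u (-m) (q - l) * qbinom u m l) (q+1)
  rw [qf, qf]
  simp only [neg_neg]
  rw [← h]
  refine Finset.sum_congr rfl fun l hl => ?_
  rw [Finset.mem_range] at hl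
  rw [show q + 1 - 1 - l = q - l from by omega, show q - (q - l) = l from by omega, mul_comm]

lemma qf_rec (m : ℤ) (q : ℕ) :
    qf u m (q+1) = u ^ (-(q+1:ℤ)) * qf u (m-1) (q+1) + u ^ (m-(q+1:ℤ)) * qf u (m-1) q
      - u ^ (m-1) * qf u m q := by
  have hB : ∀ l : ℕ, qbinom u (-m) (l+1)
      = u ^ (-((l:ℤ)+1)) * qbinom u (-(m-1)) (l+1) - u ^ (m-1) * qbinom u (-m) l := by
    intro l
    have hC := qbinom_pascal_B hu0 hu (-(m-1)) l
    rw [show (-(m-1)) - 1 = -m from by ring] at hC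
    rw [hC, mul_add, ← mul_assoc, ← mul_assoc, ← zpow_add₀ hu0, ← zpow_add₀ hu0,
      show (-((l:ℤ)+1)) + ((l:ℤ)+1) = 0 from by ring,
      show (-((l:ℤ)+1)) + (((l:ℤ)+1) - (-(m-1))) = m - 1 from by ring,
      zpow_zero, one_mul]
    ring
  have step1 : qf u m (q+1)
      = (∑ l ∈ range (q+2), u ^ (-(l:ℤ)) * (qbinom u m (q+1-l) * qbinom u (-(m-1)) l))
        - u ^ (m-1) * qf u m q := by
    rw [qf, Finset.sum_range_succ']
    conv_rhs => rw [Finset.sum_range_succ']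
    have e1 : ∀ l ∈ range (q+1),
        qbinom u m (q+1-(l+1)) * qbinom u (-m) (l+1)
        = u ^ (-((l+1:ℕ):ℤ)) * (qbinom u m (q+1-(l+1)) * qbinom u (-(m-1)) (l+1))
          - u ^ (m-1) * (qbinom u m (q-l) * qbinom u (-m) l) := by
      intro l _
      rw [show q+1-(l+1) = q - l from by omega, hB l]
      push_cast
      ring
    rw [Finset.sum_congr rfl e1, Finset.sum_sub_distrib, ← Finset.mul_sum]
    rw [qf]
    simp only [Nat.sub_zero, Nat.cast_zero, neg_zero, zpow_zero, one_mul, qbinom_zero]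
    ring
  have step2 : (∑ l ∈ range (q+2), u ^ (-(l:ℤ)) * (qbinom u m (q+1-l) * qbinom u (-(m-1)) l))
      = u ^ (-(q+1:ℤ)) * qf u (m-1) (q+1) + u ^ (m-(q+1:ℤ)) * qf u (m-1) q := by
    rw [Finset.sum_range_succ]
    have e2 : ∀ l ∈ range (q+1),
        u ^ (-(l:ℤ)) * (qbinom u m (q+1-l) * qbinom u (-(m-1)) l)
        = u ^ (-(q+1:ℤ)) * (qbinom u (m-1) (q+1-l) * qbinom u (-(m-1)) l)
          + u ^ (m-(q+1:ℤ)) * (qbinom u (m-1) (q-l) * qbinom u (-(m-1)) l) := by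
      intro l hl
      rw [Finset.mem_range] at hl
      rw [show q+1-l = (q-l)+1 from by omega, qbinom_pascal_A hu0 hu m (q-l),
        show (((q-l:ℕ)):ℤ) = (q:ℤ) - l from by omega]
      have k1 : u ^ (-(l:ℤ)) * u ^ (-((q:ℤ)-l+1)) = u ^ (-(q+1:ℤ)) := by
        rw [← zpow_add₀ hu0, show -(l:ℤ) + (-((q:ℤ)-l+1)) = -(q+1:ℤ) from by ring]
      have k2 : u ^ (-(l:ℤ)) * u ^ (m-((q:ℤ)-l+1)) = u ^ (m-(q+1:ℤ)) := by
        rw [← zpow_add₀ hu0, show -(l:ℤ) + (m-((q:ℤ)-l+1)) = m-(q+1:ℤ) from by ring]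
      linear_combination (qbinom u (m - 1) (q - l + 1) * qbinom u (-(m-1)) l) * k1
        + (qbinom u (m - 1) (q - l) * qbinom u (-(m-1)) l) * k2
    rw [Finset.sum_congr rfl e2, Finset.sum_add_distrib, ← Finset.mul_sum, ← Finset.mul_sum]
    have hq1 : qf u (m-1) (q+1)
        = (∑ l ∈ range (q+1), qbinom u (m-1) (q+1-l) * qbinom u (-(m-1)) l)
          + qbinom u (-(m-1)) (q+1) := by
      rw [qf, Finset.sum_range_succ, Nat.sub_self, qbinom_zero, one_mul]
    rw [hq1, qf]
    simp only [Nat.sub_self, qbinom_zero, one_mul]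
    push_cast
    ring
  rw [step1, step2]
lemma qf_eq_zero (q : ℕ) (hq : 0 < q) : ∀ m : ℤ, qf u m q = 0 := by
  induction q with
  | zero => omega
  | succ q ih =>
    have key : ∀ m' : ℤ, qf u m' (q+1) = u ^ (-(q+1:ℤ)) * qf u (m'-1) (q+1) := by
      intro m'
      rcases Nat.eq_zero_or_pos q with h0 | hqpos
      · subst h0
        rw [qf_rec hu0 hu m' 0, qf_zero, qf_zero]
        ring
      · rw [qf_rec hu0 hu m' q, ih hqpos (m'-1), ih hqpos m']
        ring
    intro m
    have h1 := key m
    have h2 := key (1-m)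
    rw [show (1-m) - 1 = -m from by ring, (qf_symm (u := u) (m := m) (q := q+1))] at h2
    have h3 : qf u (m-1) (q+1) = qf u (1-m) (q+1) := by
      rw [show (1:ℤ)-m = -(m-1) from by ring, qf_symm]
    rw [h3, h2, ← mul_assoc, ← zpow_add₀ hu0] at h1
    have h5 : (1 - u ^ ((-(q+1:ℤ)) + (-(q+1:ℤ)))) * qf u m (q+1) = 0 := by
      rw [sub_mul, one_mul, ← h1, sub_self]
    have h6 : (1 - u ^ ((-(q+1:ℤ)) + (-(q+1:ℤ)))) ≠ 0 := by
      rw [sub_ne_zero]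
      intro hcontra
      have : u ^ ((q:ℤ)+1+(q+1)) = 1 := by
        rw [show (q:ℤ)+1+(q+1) = -((-(q+1:ℤ)) + (-(q+1:ℤ))) from by ring, zpow_neg, ← hcontra,
          inv_one]
      exact hu ((q:ℤ)+1+(q+1)) (by omega) this
    have := mul_eq_zero.mp h5
    tauto
omit hu0 hu

/-- In case `0 < b a_2 ≤ a_1`, the coefficients
`e(p,q) = [a_2 choose p]_{v^b} [a_1 - bp choose q]_{v^c}` satisfy the second branch
of the quantum greedy recurrence. -/
theorem greedy_case4_second_branch (b c : ℕ) (hb : 0 < b) (hc : 0 < c) (a1 a2 : ℤ)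
    (hpos : 0 < b * a2) (hle : b * a2 ≤ a1) :
    ∀ p q : ℕ, (p, q) ≠ (0, 0) → (b : ℤ) * a2 * p ≤ (c : ℤ) * a1 * q →
      qbinom (wvar ^ b) a2 p * qbinom (wvar ^ c) (a1 - b * p) q =
        ∑ l ∈ Finset.Icc 1 q, (-1 : KK) ^ (l - 1) *
          (qbinom (wvar ^ b) a2 p * qbinom (wvar ^ c) (a1 - b * p) (q - l)) *
          qbinom (wvar ^ c) (max (a1 - b * p) 0 + (l : ℤ) - 1) l := by
  intro p q hpq hineq
  have hu0 : (wvar ^ c : KK) ≠ 0 := wvar_pow_ne_zero c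
  have hu : ∀ n : ℤ, 0 < n → ((wvar ^ c : KK)) ^ n ≠ 1 := wvar_pow_ne_one c hc
  have hbz : (0:ℤ) < b := by exact_mod_cast hb
  have ha2 : 0 < a2 := by
    by_contra h
    push_neg at h
    have : (b:ℤ) * a2 ≤ 0 := mul_nonpos_of_nonneg_of_nonpos hbz.le h
    omega
  have hq : q ≠ 0 := by
    rintro rfl
    have hp : p ≠ 0 := by simpa using hpq
    have hp' : (0:ℤ) < (p:ℤ) := by exact_mod_cast Nat.pos_of_ne_zero hp
    have : (0:ℤ) < (b:ℤ) * a2 * p := mul_pos hpos hp'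
    simp only [Nat.cast_zero, mul_zero] at hineq
    omega
  by_cases hp : (p:ℤ) ≤ a2
  · -- p ≤ a2 : m = a1 - b p ≥ 0
    have hm : 0 ≤ a1 - (b:ℤ) * p := by
      have h1 : (b:ℤ) * p ≤ (b:ℤ) * a2 := mul_le_mul_of_nonneg_left hp hbz.le
      omega
    set u : KK := wvar ^ c with hudef
    set m : ℤ := a1 - (b:ℤ) * p with hmdef
    set E : KK := qbinom (wvar ^ b) a2 p with hEdef
    rw [max_eq_left hm]
    have hterm : ∀ l ∈ Finset.Icc 1 q,
        (-1 : KK) ^ (l - 1) * (E * qbinom u m (q - l)) * qbinom u (m + (l : ℤ) - 1) l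
        = -(E * (qbinom u m (q - l) * qbinom u (-m) l)) := by
      intro l hl
      rw [Finset.mem_Icc] at hl
      have hodd := qbinom_neg (u := u) m l
      have hsq : ((-1 : KK)) ^ l * (-1 : KK) ^ l = 1 := by
        rw [← pow_add, Even.neg_one_pow ⟨l, rfl⟩]
      have h2 : qbinom u (m + (l:ℤ) - 1) l = (-1:KK) ^ l * qbinom u (-m) l := by
        rw [hodd, ← mul_assoc, hsq, one_mul]
      rw [h2]
      have hsign : (-1 : KK) ^ (l - 1) * (-1 : KK) ^ l = -1 := by
        rw [← pow_add]
        exact Odd.neg_one_pow ⟨l - 1, by omega⟩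
      calc (-1 : KK) ^ (l - 1) * (E * qbinom u m (q - l)) * ((-1:KK) ^ l * qbinom u (-m) l)
          = ((-1 : KK) ^ (l - 1) * (-1 : KK) ^ l) * (E * (qbinom u m (q - l) * qbinom u (-m) l)) := by
            ring
        _ = -(E * (qbinom u m (q - l) * qbinom u (-m) l)) := by rw [hsign]; ring
    rw [Finset.sum_congr rfl hterm]
    have hsum : (∑ l ∈ Finset.Icc 1 q, qbinom u m (q - l) * qbinom u (-m) l)
        = -(qbinom u m q) := by
      have h0 : qf u m q = 0 := qf_eq_zero hu0 hu q (Nat.pos_of_ne_zero hq) m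
      have hsplit : qf u m q
          = (∑ l ∈ range q, qbinom u m (q - (l+1)) * qbinom u (-m) (l+1))
            + qbinom u m q := by
        rw [qf, Finset.sum_range_succ']
        simp [qbinom_zero]
      have hIcc : (∑ l ∈ Finset.Icc 1 q, qbinom u m (q - l) * qbinom u (-m) l)
          = ∑ l ∈ range q, qbinom u m (q - (l+1)) * qbinom u (-m) (l+1) := by
        rw [show Finset.Icc 1 q = Finset.Ico 1 (q+1) from by rw [Finset.Ico_add_one_right_eq_Icc],
          Finset.sum_Ico_eq_sum_range]
        refine Finset.sum_congr (by congr 1) fun l _ => by rw [add_comm 1 l]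
      rw [hIcc]
      have h1 := hsplit.symm.trans h0
      linear_combination h1
    calc E * qbinom u m q
        = -(E * ∑ l ∈ Finset.Icc 1 q, qbinom u m (q - l) * qbinom u (-m) l) := by
          rw [hsum]; ring
      _ = ∑ l ∈ Finset.Icc 1 q, -(E * (qbinom u m (q - l) * qbinom u (-m) l)) := by
          rw [Finset.mul_sum, ← Finset.sum_neg_distrib]
  · -- p > a2 : qbinom (wvar^b) a2 p = 0
    push_neg at hp
    have hE : qbinom (wvar ^ b) a2 p = 0 := by
      rw [qbinom]
      rw [Finset.prod_eq_zero (i := a2.toNat)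
        (by rw [Finset.mem_range]; omega)
        (by rw [show a2 - ((a2.toNat : ℕ) : ℤ) = 0 from by omega, qint_zero]), zero_div]
    rw [hE]
    simp

end
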